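/- Let λ be a standard half-Cauchy random variable (density 2/(π(1+x²)) on (0,∞)) and let Z be a standard normal random variable independent of λ. Then for every τ > 0 and every t > 0, P(τ·λ·|Z| > t) ≤ 2√(2/π) · τ/t. -/

import Mathlib

open MeasureTheory ProbabilityTheory

/-- The standard half-Cauchy distribution `Ca⁺(0,1)`: density `2/(π(1+x²))` on `(0,∞)`. -/
noncomputable def halfCauchy : Measure ℝ :=
  volume.withDensity fun x => ENNReal.ofReal (if 0 < x then 2 / (Real.pi * (1 + x ^ 2)) else 0)

instance : SFinite halfCauchy := by unfold halfCauchy; infer_instance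

lemma arctan_le_self' {x : ℝ} (hx : 0 ≤ x) : Real.arctan x ≤ x := by
  rcases eq_or_lt_of_le hx with h | h
  · simp [← h]
  have hpos : 0 < Real.arctan x := by
    have := Real.arctan_strictMono h
    rwa [Real.arctan_zero] at this
  calc Real.arctan x ≤ Real.tan (Real.arctan x) :=
        Real.le_tan hpos.le (Real.arctan_lt_pi_div_two x)
    _ = x := Real.tan_arctan x

lemma halfCauchy_tail {a : ℝ} (ha : 0 < a) :
    halfCauchy (Set.Ioi a) ≤ ENNReal.ofReal (2 / (Real.pi * a)) := by
  have hπ : 0 < Real.pi := Real.pi_pos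
  rw [halfCauchy, withDensity_apply _ measurableSet_Ioi]
  have h1 : ∫⁻ x in Set.Ioi a, ENNReal.ofReal
      (if 0 < x then 2 / (Real.pi * (1 + x ^ 2)) else 0)
      = ∫⁻ x in Set.Ioi a, ENNReal.ofReal ((2 / Real.pi) * (1 + x ^ 2)⁻¹) := by
    refine setLIntegral_congr_fun measurableSet_Ioi (fun x hx => ?_)
    rw [if_pos (ha.trans hx)]
    congr 1
    field_simp
  rw [h1]
  have hint : IntegrableOn (fun x : ℝ => (2 / Real.pi) * (1 + x ^ 2)⁻¹) (Set.Ioi a) :=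
    (integrable_inv_one_add_sq.const_mul _).integrableOn
  rw [← ofReal_integral_eq_lintegral_ofReal hint
      (ae_of_all _ fun x => by positivity)]
  rw [integral_const_mul, integral_Ioi_inv_one_add_sq]
  apply ENNReal.ofReal_le_ofReal
  have harc : Real.pi / 2 - Real.arctan a = Real.arctan a⁻¹ :=
    (Real.arctan_inv_of_pos ha).symm
  have hle : Real.pi / 2 - Real.arctan a ≤ a⁻¹ := by
    rw [harc]; exact arctan_le_self' (by positivity)
  have h2 : 2 / (Real.pi * a) = (2 / Real.pi) * a⁻¹ := by field_simp
  rw [h2]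
  exact mul_le_mul_of_nonneg_left hle (by positivity)

lemma abs_le_exp_sq_div_four (z : ℝ) : |z| ≤ Real.exp (z ^ 2 / 4) := by
  have h1 : 1 + z ^ 2 / 4 ≤ Real.exp (z ^ 2 / 4) := by
    have := Real.add_one_le_exp (z ^ 2 / 4); linarith
  nlinarith [sq_nonneg (|z| / 2 - 1), sq_abs z, abs_nonneg z]

lemma gaussian_abs_moment_le :
    ∫⁻ z, ENNReal.ofReal |z| ∂(gaussianReal 0 1) ≤ ENNReal.ofReal (Real.sqrt 2) := by
  rw [gaussianReal_of_var_ne_zero 0 one_ne_zero,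
    lintegral_withDensity_eq_lintegral_mul _ (measurable_gaussianPDF 0 1)
      (measurable_abs.ennreal_ofReal)]
  have hb : (0:ℝ) < 1/4 := by norm_num
  have key : ∀ z : ℝ, (gaussianPDF 0 1 * fun z => ENNReal.ofReal |z|) z
      ≤ ENNReal.ofReal ((Real.sqrt (2 * Real.pi))⁻¹ * Real.exp (-(1/4) * z ^ 2)) := by
    intro z
    simp only [Pi.mul_apply, gaussianPDF_def, gaussianPDFReal]
    rw [← ENNReal.ofReal_mul (by positivity)]
    apply ENNReal.ofReal_le_ofReal
    push_cast
    have h1 : (Real.sqrt (2 * Real.pi * 1))⁻¹ = (Real.sqrt (2 * Real.pi))⁻¹ := by norm_num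
    rw [h1, mul_assoc]
    refine mul_le_mul_of_nonneg_left ?_ (by positivity)
    have h2 : Real.exp (-(z - 0) ^ 2 / (2 * 1)) * |z|
        ≤ Real.exp (-(z - 0) ^ 2 / (2 * 1)) * Real.exp (z ^ 2 / 4) :=
      mul_le_mul_of_nonneg_left (abs_le_exp_sq_div_four z) (Real.exp_pos _).le
    refine h2.trans ?_
    rw [← Real.exp_add]
    apply Real.exp_le_exp.mpr
    ring_nf
    try exact le_rfl
  calc ∫⁻ z, (gaussianPDF 0 1 * fun z => ENNReal.ofReal |z|) z
      ≤ ∫⁻ z, ENNReal.ofReal ((Real.sqrt (2 * Real.pi))⁻¹ * Real.exp (-(1/4) * z ^ 2)) :=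
        lintegral_mono key
    _ = ENNReal.ofReal (∫ z : ℝ, (Real.sqrt (2 * Real.pi))⁻¹ * Real.exp (-(1/4) * z ^ 2)) := by
        rw [ofReal_integral_eq_lintegral_ofReal
          ((integrable_exp_neg_mul_sq hb).const_mul _) (ae_of_all _ fun z => by positivity)]
    _ ≤ ENNReal.ofReal (Real.sqrt 2) := by
        apply ENNReal.ofReal_le_ofReal
        rw [integral_const_mul, integral_gaussian]
        rw [inv_mul_le_iff₀ (by positivity)]
        rw [← Real.sqrt_mul (by positivity)]
        apply Real.sqrt_le_sqrt
        nlinarith [Real.pi_pos]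

/-- tail bound for the horseshoe-type scale mixture: if `λ ~ Ca⁺(0,1)` and
`Z ~ N(0,1)` are independent, then for all `τ, t > 0`, `P(τλ|Z| > t) ≤ 2√(2/π)·τ/t`. -/
theorem stmt_4 (τ t : ℝ) (hτ : 0 < τ) (ht : 0 < t) :
    (halfCauchy.prod (gaussianReal 0 1)) {x : ℝ × ℝ | t < τ * x.1 * |x.2|} ≤
      ENNReal.ofReal (2 * Real.sqrt (2 / Real.pi) * τ / t) := by
  have hπ : 0 < Real.pi := Real.pi_pos
  have hS : MeasurableSet {x : ℝ × ℝ | t < τ * x.1 * |x.2|} := by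
    apply measurableSet_lt measurable_const
    exact (measurable_fst.const_mul τ).mul measurable_snd.abs
  rw [Measure.prod_apply_symm hS]
  have hslice : ∀ z : ℝ, halfCauchy ((fun x => (x, z)) ⁻¹' {x : ℝ × ℝ | t < τ * x.1 * |x.2|})
      ≤ ENNReal.ofReal (2 * τ / (Real.pi * t)) * ENNReal.ofReal |z| := by
    intro z
    rcases eq_or_ne z 0 with rfl | hz
    · have hempty : ((fun x => (x, (0:ℝ))) ⁻¹' {x : ℝ × ℝ | t < τ * x.1 * |x.2|}) = ∅ := by
        ext x; simp [ht.not_gt, not_lt, le_of_lt ht]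
      simp [hempty]
    · have hz' : 0 < |z| := abs_pos.mpr hz
      have ha : 0 < t / (τ * |z|) := by positivity
      have hset : ((fun x => (x, z)) ⁻¹' {x : ℝ × ℝ | t < τ * x.1 * |x.2|})
          = Set.Ioi (t / (τ * |z|)) := by
        ext x
        simp only [Set.mem_preimage, Set.mem_setOf_eq, Set.mem_Ioi]
        rw [div_lt_iff₀ (by positivity)]
        constructor <;> intro h <;> nlinarith
      rw [hset]
      refine (halfCauchy_tail ha).trans ?_
      rw [← ENNReal.ofReal_mul (by positivity)]
      apply ENNReal.ofReal_le_ofReal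
      apply le_of_eq
      field_simp
  calc ∫⁻ z, halfCauchy ((fun x => (x, z)) ⁻¹' {x : ℝ × ℝ | t < τ * x.1 * |x.2|})
        ∂(gaussianReal 0 1)
      ≤ ∫⁻ z, ENNReal.ofReal (2 * τ / (Real.pi * t)) * ENNReal.ofReal |z|
        ∂(gaussianReal 0 1) := lintegral_mono hslice
    _ = ENNReal.ofReal (2 * τ / (Real.pi * t)) * ∫⁻ z, ENNReal.ofReal |z|
        ∂(gaussianReal 0 1) := lintegral_const_mul _ measurable_abs.ennreal_ofReal
    _ ≤ ENNReal.ofReal (2 * τ / (Real.pi * t)) * ENNReal.ofReal (Real.sqrt 2) :=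
        mul_le_mul_right gaussian_abs_moment_le _
    _ ≤ ENNReal.ofReal (2 * Real.sqrt (2 / Real.pi) * τ / t) := by
        rw [← ENNReal.ofReal_mul (by positivity)]
        apply ENNReal.ofReal_le_ofReal
        have hsp : Real.sqrt Real.pi ≤ Real.pi := by
          nlinarith [sq_nonneg (Real.sqrt Real.pi - 1), Real.sq_sqrt hπ.le,
            Real.sqrt_nonneg Real.pi, Real.pi_gt_three]
        have hsq : Real.sqrt (2 / Real.pi) = Real.sqrt 2 / Real.sqrt Real.pi :=
          Real.sqrt_div (by norm_num) Real.pi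
        rw [hsq]
        have hsp0 : 0 < Real.sqrt Real.pi := Real.sqrt_pos.mpr hπ
        have e1 : 2 * τ / (Real.pi * t) * Real.sqrt 2
            = 2 * Real.sqrt 2 * τ / (Real.pi * t) := by ring
        have e2 : 2 * (Real.sqrt 2 / Real.sqrt Real.pi) * τ / t
            = 2 * Real.sqrt 2 * τ / (Real.sqrt Real.pi * t) := by
          field_simp
        rw [e1, e2]
        gcongr
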